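/- Let α₁ ≥ ⋯ ≥ α_k ≥ 0 and β₁ ≥ ⋯ ≥ β_k ≥ 0 be integers with Σ_{i=1}^j α_i ≤ Σ_{i=1}^j β_i for all j. If Σ_{i=1}^j (β_i − α_i) > 0 for every j = 1,…,k and Σ_{i=1}^k α_i² = Σ_{i=1}^k β_i², then α_j = β_j = 0 for all j, a contradiction; hence under the equality of sums of squares there exists j with Σ_{i=1}^j (β_i − α_i) = 0, and the minimal such j equals 1. -/

import Mathlib

open Finset

private lemma mono_aux (k : ℕ) (f : ℕ → ℤ)
    (h : ∀ i, 1 ≤ i → i < k → f (i + 1) ≤ f i) :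
    ∀ i j, 1 ≤ i → i ≤ j → j ≤ k → f j ≤ f i := by
  intro i j hi
  induction j with
  | zero => intro h1 _; omega
  | succ n ih =>
    intro hij hjk
    rcases Nat.lt_or_ge i (n + 1) with hlt | hge
    · exact le_trans (h n (by omega) (by omega)) (ih (by omega) (by omega))
    · have : i = n + 1 := by omega
      subst this; exact le_rfl

private lemma abel_aux (c d : ℕ → ℤ) :
    ∀ n : ℕ, ∑ i ∈ Icc 1 (n + 1), c i * d i
      = (∑ j ∈ Icc 1 n, (c j - c (j + 1)) * (∑ i ∈ Icc 1 j, d i))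
        + c (n + 1) * (∑ i ∈ Icc 1 (n + 1), d i) := by
  intro n
  induction n with
  | zero => simp
  | succ m ih =>
    rw [Finset.sum_Icc_succ_top (by omega : (1:ℕ) ≤ m + 1 + 1) (fun i => c i * d i),
      ih,
      Finset.sum_Icc_succ_top (by omega : (1:ℕ) ≤ m + 1)
        (fun j => (c j - c (j + 1)) * (∑ i ∈ Icc 1 j, d i)),
      Finset.sum_Icc_succ_top (by omega : (1:ℕ) ≤ m + 1 + 1) d]
    ring

/-- Key step in the equality analysis of Lemma 2.2: under weak majorization
and equal sums of squares, some partial sums of β − α vanish, and the minimal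
index where they vanish is 1 (i.e. α₁ = β₁). -/
theorem stmt_17 (k : ℕ) (hk : 1 ≤ k) (α β : ℕ → ℤ)
    (hαmono : ∀ i, 1 ≤ i → i < k → α (i + 1) ≤ α i)
    (hβmono : ∀ i, 1 ≤ i → i < k → β (i + 1) ≤ β i)
    (hαnn : ∀ i, 1 ≤ i → i ≤ k → 0 ≤ α i)
    (hβnn : ∀ i, 1 ≤ i → i ≤ k → 0 ≤ β i)
    (hmaj : ∀ j, 1 ≤ j → j ≤ k →
      ∑ i ∈ Finset.Icc 1 j, α i ≤ ∑ i ∈ Finset.Icc 1 j, β i)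
    (heq : ∑ i ∈ Finset.Icc 1 k, (α i) ^ 2 = ∑ i ∈ Finset.Icc 1 k, (β i) ^ 2) :
    (∃ j, 1 ≤ j ∧ j ≤ k ∧ ∑ i ∈ Finset.Icc 1 j, (β i - α i) = 0) ∧
      α 1 = β 1 := by
  classical
  set d : ℕ → ℤ := fun i => β i - α i with hd
  set c : ℕ → ℤ := fun i => β i + α i with hc
  set S : ℕ → ℤ := fun j => ∑ i ∈ Icc 1 j, d i with hSdef
  have hSnn : ∀ j, 1 ≤ j → j ≤ k → 0 ≤ S j := by
    intro j h1 h2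
    have h := hmaj j h1 h2
    have : S j = (∑ i ∈ Icc 1 j, β i) - (∑ i ∈ Icc 1 j, α i) := by
      simp [hSdef, hd, Finset.sum_sub_distrib]
    omega
  have hcnn : ∀ i, 1 ≤ i → i ≤ k → 0 ≤ c i := fun i h1 h2 =>
    add_nonneg (hβnn i h1 h2) (hαnn i h1 h2)
  have hαm := mono_aux k α hαmono
  have hβm := mono_aux k β hβmono
  have hcm : ∀ i j, 1 ≤ i → i ≤ j → j ≤ k → c j ≤ c i := fun i j h1 h2 h3 =>
    add_le_add (hβm i j h1 h2 h3) (hαm i j h1 h2 h3)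
  obtain ⟨m, rfl⟩ : ∃ m, k = m + 1 := ⟨k - 1, by omega⟩
  have hzero : ∑ i ∈ Icc 1 (m + 1), c i * d i = 0 := by
    have he : ∀ i ∈ Icc 1 (m + 1), c i * d i = β i ^ 2 - α i ^ 2 := by
      intro i _; simp only [hc, hd]; ring
    rw [Finset.sum_congr rfl he, Finset.sum_sub_distrib]
    omega
  have habel : (0:ℤ) = (∑ j ∈ Icc 1 m, (c j - c (j + 1)) * S j)
      + c (m + 1) * S (m + 1) := by
    rw [← hzero]; exact abel_aux c d m
  have htermnn : ∀ j ∈ Icc 1 m, 0 ≤ (c j - c (j + 1)) * S j := by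
    intro j hj
    simp only [Finset.mem_Icc] at hj
    have h1 := hcm j (j + 1) hj.1 (by omega) (by omega)
    exact mul_nonneg (by omega) (hSnn j hj.1 (by omega))
  have hA : 0 ≤ ∑ j ∈ Icc 1 m, (c j - c (j + 1)) * S j := Finset.sum_nonneg htermnn
  have hB : 0 ≤ c (m + 1) * S (m + 1) :=
    mul_nonneg (hcnn (m + 1) (by omega) le_rfl) (hSnn (m + 1) (by omega) le_rfl)
  have hAz : ∑ j ∈ Icc 1 m, (c j - c (j + 1)) * S j = 0 := by omega
  have hBz : c (m + 1) * S (m + 1) = 0 := by omega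
  have hterm0 : ∀ j, 1 ≤ j → j ≤ m → (c j - c (j + 1)) * S j = 0 := by
    intro j h1 h2
    exact (Finset.sum_eq_zero_iff_of_nonneg htermnn).mp hAz j (Finset.mem_Icc.mpr ⟨h1, h2⟩)
  have hS1 : S 1 = d 1 := by simp [hSdef]
  have hd1nn : 0 ≤ d 1 := by
    have := hSnn 1 (by omega) (by omega); omega
  have hαβ1 : α 1 = β 1 := by
    by_contra hne
    have hd1 : 0 < d 1 := by simp only [hd] at hd1nn ⊢; omega
    have key : ∀ j, 1 ≤ j → j ≤ m + 1 → 0 < S j ∧ c j = c 1 := by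
      intro j
      induction j with
      | zero => omega
      | succ n ih =>
        intro _ hle
        rcases Nat.eq_zero_or_pos n with hn0 | hn1
        · subst hn0
          refine ⟨?_, rfl⟩
          show 0 < S 1
          omega
        · obtain ⟨hSn, hcn⟩ := ih (by omega) (by omega)
          have ht := hterm0 n hn1 (by omega)
          have hcn1 : c (n + 1) = c 1 := by
            rcases mul_eq_zero.mp ht with h | h
            · omega
            · omega
          have hα1 := hαm 1 (n + 1) (by omega) (by omega) (by omega)
          have hβ1 := hβm 1 (n + 1) (by omega) (by omega) (by omega)
          have hdn1 : d (n + 1) = d 1 := by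
            simp only [hc] at hcn1; simp only [hd]; omega
          have hSstep : S (n + 1) = S n + d (n + 1) := by
            simp only [hSdef]
            exact Finset.sum_Icc_succ_top (by omega : (1:ℕ) ≤ n + 1) d
          refine ⟨by omega, hcn1⟩
    obtain ⟨hSk, hck⟩ := key (m + 1) (by omega) le_rfl
    have hc1z : c 1 = 0 := by
      rcases mul_eq_zero.mp hBz with h | h
      · omega
      · omega
    have hα1nn := hαnn 1 (by omega) (by omega)
    have hβ1nn := hβnn 1 (by omega) (by omega)
    simp only [hc] at hc1z
    simp only [hd] at hd1
    omega
  refine ⟨⟨1, le_rfl, by omega, ?_⟩, hαβ1⟩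
  rw [Finset.Icc_self, Finset.sum_singleton]
  omega
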